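/- The relative category relcat(f) of a map of CW pairs f : (X,A) → (Y,B) is invariant under homotopy of maps of pairs: if f ≃ g as maps of pairs, then relcat(f) = relcat(g). -/

import Mathlib

open Set unitInterval

section Defs

variable {X : Type*} {Y : Type*} [TopologicalSpace X] [TopologicalSpace Y]

/-- The restriction of `f` to `V` is null-homotopic. -/
def NullhomotopicOn (f : X → Y) (V : Set X) : Prop :=
  ∃ (H : C(unitInterval × ↥V, Y)) (y : Y),
    (∀ x : ↥V, H (1, x) = f x) ∧ (∀ x : ↥V, H (0, x) = y)

/-- The restriction of `f` to `V` is homotopic to a map with values in `A`. -/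
def DeformsIntoOn (f : X → Y) (V : Set X) (A : Set Y) : Prop :=
  ∃ H : C(unitInterval × ↥V, Y),
    (∀ x : ↥V, H (1, x) = f x) ∧ (∀ x : ↥V, H (0, x) ∈ A)

/-- There is a homotopy of pairs `(V × I, (V ∩ A) × I) → (Y, B)` ending at `f|_V`
and starting at a map into `B`. -/
def RelPairDeform (f : X → Y) (V A : Set X) (B : Set Y) : Prop :=
  ∃ H : C(unitInterval × ↥V, Y),
    (∀ x : ↥V, H (1, x) = f x) ∧ (∀ x : ↥V, H (0, x) ∈ B) ∧
    (∀ (t : unitInterval) (x : ↥V), (x : X) ∈ A → H (t, x) ∈ B)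

/-- `relcat f A B ≤ n` : covering by `n+1` open sets as in the definition of the
relative category of a map of pairs `f : (X,A) → (Y,B)`. -/
def relcatLE (f : X → Y) (A : Set X) (B : Set Y) (n : ℕ) : Prop :=
  ∃ V : Fin (n + 1) → Set X, (∀ i, IsOpen (V i)) ∧ (⋃ i, V i) = Set.univ ∧
    A ⊆ V 0 ∧ (∀ i, i ≠ 0 → NullhomotopicOn f (V i)) ∧ RelPairDeform f (V 0) A B

/-- The relative category of a map of pairs `f : (X,A) → (Y,B)` (`⊤` if none exists). -/
noncomputable def relcat (f : X → Y) (A : Set X) (B : Set Y) : ℕ∞ :=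
  sInf {n : ℕ∞ | ∃ m : ℕ, n = (m : ℕ∞) ∧ relcatLE f A B m}

/-- `qscat f A ≤ n` : covering by `n+1` open sets on each of which `f` deforms into `A`. -/
def qscatLE (f : X → Y) (A : Set Y) (n : ℕ) : Prop :=
  ∃ V : Fin (n + 1) → Set X, (∀ i, IsOpen (V i)) ∧ (⋃ i, V i) = Set.univ ∧
    ∀ i, DeformsIntoOn f (V i) A

/-- The quasi-strong LS category of a map of pairs `f : (B,C) → (X,A)`. -/
noncomputable def qscat (f : X → Y) (A : Set Y) : ℕ∞ :=
  sInf {n : ℕ∞ | ∃ m : ℕ, n = (m : ℕ∞) ∧ qscatLE f A m}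

/-- The restriction of `f : (X,C) → (Y,A)` to `(V, V ∩ C)` is strongly relatively
inessential. -/
def StronglyRelInessentialOn (f : X → Y) (V C : Set X) (A : Set Y) : Prop :=
  ∃ H : C(unitInterval × ↥V, Y),
    (∀ x : ↥V, H (1, x) = f x) ∧ (∀ x : ↥V, H (0, x) ∈ A) ∧
    (∀ (t : unitInterval) (x : ↥V), (x : X) ∈ C → H (t, x) = f x)

/-- `srelcat f C A ≤ n`. -/
def srelcatLE (f : X → Y) (C : Set X) (A : Set Y) (n : ℕ) : Prop :=
  ∃ V : Fin (n + 1) → Set X, (∀ i, IsOpen (V i)) ∧ (⋃ i, V i) = Set.univ ∧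
    ∀ i, StronglyRelInessentialOn f (V i) C A

/-- The strong relative LS category of a map of pairs `f : (B,C) → (X,A)`. -/
noncomputable def srelcat (f : X → Y) (C : Set X) (A : Set Y) : ℕ∞ :=
  sInf {n : ℕ∞ | ∃ m : ℕ, n = (m : ℕ∞) ∧ srelcatLE f C A m}

/-- `catMap f ≤ n` : covering by `n+1` open sets on each of which `f` is null-homotopic. -/
def catMapLE (f : X → Y) (n : ℕ) : Prop :=
  ∃ V : Fin (n + 1) → Set X, (∀ i, IsOpen (V i)) ∧ (⋃ i, V i) = Set.univ ∧
    ∀ i, NullhomotopicOn f (V i)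

/-- The LS category of a map. -/
noncomputable def catMap (f : X → Y) : ℕ∞ :=
  sInf {n : ℕ∞ | ∃ m : ℕ, n = (m : ℕ∞) ∧ catMapLE f m}

end Defs

/-- The `n`-th (higher) topological complexity of a map `f : X → Y`:
`qscat` of the induced map of pairs `(Xⁿ, Δₙ(X)) → (Yⁿ, Δₙ(Y))`. -/
noncomputable def TCmap (n : ℕ) {X Y : Type*} [TopologicalSpace X] [TopologicalSpace Y]
    (f : X → Y) : ℕ∞ :=
  qscat (fun x : Fin n → X => fun i => f (x i)) {y : Fin n → Y | ∀ i j, y i = y j}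

section Aux

variable {X Y : Type*} [TopologicalSpace X] [TopologicalSpace Y]

/-- restriction of a map to a subset, as a continuous map -/
private def restr (f : X → Y) (hf : Continuous f) (V : Set X) : C(↥V, Y) :=
  ⟨fun x => f x, hf.comp continuous_subtype_val⟩

private lemma nullhomotopicOn_of_homotopy {f g : X → Y} (hf : Continuous f)
    (hg : Continuous g) (H : C(unitInterval × X, Y))
    (hH0 : ∀ x, H (0, x) = f x) (hH1 : ∀ x, H (1, x) = g x) (V : Set X)
    (h : NullhomotopicOn g V) : NullhomotopicOn f V := by
  obtain ⟨K, y, hK1, hK0⟩ := h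
  let HV : ContinuousMap.Homotopy (restr f hf V) (restr g hg V) :=
    { toFun := fun p => H (p.1, (p.2 : X))
      continuous_toFun := H.continuous.comp (by continuity)
      map_zero_left := fun x => hH0 x
      map_one_left := fun x => hH1 x }
  let K0 : ContinuousMap.Homotopy (ContinuousMap.const ↥V y) (restr g hg V) :=
    { toContinuousMap := K
      map_zero_left := hK0
      map_one_left := hK1 }
  refine ⟨(K0.trans HV.symm).toContinuousMap, y, ?_, ?_⟩
  · intro x; exact (K0.trans HV.symm).map_one_left x
  · intro x; exact (K0.trans HV.symm).map_zero_left x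

private lemma relPairDeform_of_homotopy {A : Set X} {B : Set Y} {f g : X → Y}
    (hf : Continuous f) (hg : Continuous g) (H : C(unitInterval × X, Y))
    (hH0 : ∀ x, H (0, x) = f x) (hH1 : ∀ x, H (1, x) = g x)
    (hHA : ∀ (t : unitInterval) (a : X), a ∈ A → H (t, a) ∈ B) (V : Set X)
    (h : RelPairDeform g V A B) : RelPairDeform f V A B := by
  obtain ⟨K, hK1, hK0, hKA⟩ := h
  let HV : ContinuousMap.Homotopy (restr f hf V) (restr g hg V) :=
    { toFun := fun p => H (p.1, (p.2 : X))
      continuous_toFun := H.continuous.comp (by continuity)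
      map_zero_left := fun x => hH0 x
      map_one_left := fun x => hH1 x }
  let k0 : C(↥V, Y) := ⟨fun x => K (0, x), K.continuous.comp (by continuity)⟩
  let K0 : ContinuousMap.Homotopy k0 (restr g hg V) :=
    { toContinuousMap := K
      map_zero_left := fun _ => rfl
      map_one_left := hK1 }
  refine ⟨(K0.trans HV.symm).toContinuousMap, ?_, ?_, ?_⟩
  · intro x; exact (K0.trans HV.symm).map_one_left x
  · intro x
    have := (K0.trans HV.symm).map_zero_left x
    have e : (K0.trans HV.symm) (0, x) = K (0, x) := this
    show (K0.trans HV.symm) (0, x) ∈ B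
    rw [e]; exact hK0 x
  · intro t x hx
    have htr := ContinuousMap.Homotopy.trans_apply K0 HV.symm (t, x)
    show (K0.trans HV.symm) (t, x) ∈ B
    rw [htr]
    split_ifs with h'
    · exact hKA _ x hx
    · exact hHA _ x hx

private lemma relcatLE_of_homotopy {A : Set X} {B : Set Y} {f g : X → Y}
    (hf : Continuous f) (hg : Continuous g) (H : C(unitInterval × X, Y))
    (hH0 : ∀ x, H (0, x) = f x) (hH1 : ∀ x, H (1, x) = g x)
    (hHA : ∀ (t : unitInterval) (a : X), a ∈ A → H (t, a) ∈ B) (n : ℕ)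
    (h : relcatLE g A B n) : relcatLE f A B n := by
  obtain ⟨V, hVopen, hVcov, hA, hNull, hRel⟩ := h
  exact ⟨V, hVopen, hVcov, hA,
    fun i hi => nullhomotopicOn_of_homotopy hf hg H hH0 hH1 (V i) (hNull i hi),
    relPairDeform_of_homotopy hf hg H hH0 hH1 hHA (V 0) hRel⟩

end Aux

/-- `relcat` is invariant under homotopy of maps of pairs. -/
theorem relcat_homotopy_invariant {X Y : Type*} [TopologicalSpace X] [TopologicalSpace Y]
    {A : Set X} {B : Set Y} (f g : X → Y) (hf : Continuous f) (hg : Continuous g)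
    (hfAB : Set.MapsTo f A B) (hgAB : Set.MapsTo g A B)
    (H : C(unitInterval × X, Y))
    (hH0 : ∀ x, H (0, x) = f x) (hH1 : ∀ x, H (1, x) = g x)
    (hHA : ∀ (t : unitInterval) (a : X), a ∈ A → H (t, a) ∈ B) :
    relcat f A B = relcat g A B := by
  let H' : C(unitInterval × X, Y) :=
    ⟨fun p => H (σ p.1, p.2), H.continuous.comp (by continuity)⟩
  have hH'0 : ∀ x, H' (0, x) = g x := by intro x; simp [H', hH1 x]
  have hH'1 : ∀ x, H' (1, x) = f x := by intro x; simp [H', hH0 x]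
  have hH'A : ∀ (t : unitInterval) (a : X), a ∈ A → H' (t, a) ∈ B :=
    fun t a ha => hHA _ a ha
  have key : ∀ m : ℕ, relcatLE f A B m ↔ relcatLE g A B m := fun m =>
    ⟨relcatLE_of_homotopy hg hf H' hH'0 hH'1 hH'A m,
     relcatLE_of_homotopy hf hg H hH0 hH1 hHA m⟩
  unfold relcat
  congr 1
  ext n
  simp only [Set.mem_setOf_eq, key]
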